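/- Consider the two-dimensional real algebra with basis {e₁, p} where the 'multiplication' and 'convolution' of the ℤ₂ group planar algebra are modeled as follows: elements are x = a·id + b·J with a, b ≥ 0 (δ = √2), and the block map B_{1/2} acts on the projective coordinate t = b/a by t ↦ t + t(t²−1)·(2δ²(t²+1)+(δ³+3δ)t)/(2δ² + (δ³+9δ)t + (6δ²+8)t² + 6δt³). Then: t = 1 is a fixed point; if 0 < t < 1 then the orbit t_n converges monotonically to 0; and if t > 1 then t_n converges to ∞ (equivalently 1/t_n → 0). -/

import Mathlib

open Filter

/-- `δ = √2` for the `ℤ₂` subfactor. -/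
noncomputable def isingDelta : ℝ := Real.sqrt 2

/-- The action of the block map `B_{1/2}` on the projective coordinate `t = b/a`
for the `ℤ₂` case. -/
noncomputable def isingBlock (t : ℝ) : ℝ :=
  t + t * (t ^ 2 - 1) *
      (2 * isingDelta ^ 2 * (t ^ 2 + 1) + (isingDelta ^ 3 + 3 * isingDelta) * t) /
      (2 * isingDelta ^ 2 + (isingDelta ^ 3 + 9 * isingDelta) * t +
        (6 * isingDelta ^ 2 + 8) * t ^ 2 + 6 * isingDelta * t ^ 3)

private lemma ising_d_pos : 0 < isingDelta := Real.sqrt_pos.mpr (by norm_num)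

private lemma ising_d_sq : isingDelta ^ 2 = 2 := Real.sq_sqrt (by norm_num)

private lemma ising_den_pos (t : ℝ) (ht : 0 ≤ t) :
    0 < 2 * isingDelta ^ 2 + (isingDelta ^ 3 + 9 * isingDelta) * t +
        (6 * isingDelta ^ 2 + 8) * t ^ 2 + 6 * isingDelta * t ^ 3 := by
  have hd := ising_d_pos
  have hd2 := ising_d_sq
  nlinarith [sq_nonneg t, pow_pos hd 3, mul_nonneg (mul_nonneg hd.le ht) ht,
    mul_nonneg (mul_nonneg (mul_nonneg hd.le ht) ht) ht]

/-- Closed form: `isingBlock t = t² Q(t) / D(t)`. -/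
private lemma ising_block_eq (t : ℝ) (ht : 0 ≤ t) :
    isingBlock t =
      t ^ 2 * (4 * t ^ 3 + 11 * isingDelta * t ^ 2 + 20 * t + 6 * isingDelta) /
        (4 + 11 * isingDelta * t + 20 * t ^ 2 + 6 * isingDelta * t ^ 3) := by
  have hd2 := ising_d_sq
  have hD := ising_den_pos t ht
  have hden : (2 * isingDelta ^ 2 + (isingDelta ^ 3 + 9 * isingDelta) * t +
      (6 * isingDelta ^ 2 + 8) * t ^ 2 + 6 * isingDelta * t ^ 3)
      = 4 + 11 * isingDelta * t + 20 * t ^ 2 + 6 * isingDelta * t ^ 3 := by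
    have hd3 : isingDelta ^ 3 = 2 * isingDelta := by
      calc isingDelta ^ 3 = isingDelta ^ 2 * isingDelta := by ring
      _ = 2 * isingDelta := by rw [hd2]
    rw [hd3, hd2]; ring
  have hDpos : (0:ℝ) < 4 + 11 * isingDelta * t + 20 * t ^ 2 + 6 * isingDelta * t ^ 3 := by
    rw [← hden]; exact hD
  have hd3 : isingDelta ^ 3 = 2 * isingDelta := by
    calc isingDelta ^ 3 = isingDelta ^ 2 * isingDelta := by ring
    _ = 2 * isingDelta := by rw [hd2]
  unfold isingBlock
  rw [hden, hd3, hd2]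
  rw [eq_div_iff hDpos.ne', add_mul, div_mul_cancel₀ _ hDpos.ne']
  ring

private lemma ising_Dpos (t : ℝ) (ht : 0 ≤ t) :
    (0:ℝ) < 4 + 11 * isingDelta * t + 20 * t ^ 2 + 6 * isingDelta * t ^ 3 := by
  have hd := ising_d_pos
  nlinarith [mul_nonneg (mul_nonneg hd.le ht) ht, sq_nonneg t,
    mul_nonneg (mul_nonneg (mul_nonneg hd.le ht) ht) ht]

private lemma ising_block_pos (t : ℝ) (ht : 0 < t) : 0 < isingBlock t := by
  rw [ising_block_eq t ht.le]
  have hd := ising_d_pos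
  apply div_pos _ (ising_Dpos t ht.le)
  have : 0 < 4 * t ^ 3 + 11 * isingDelta * t ^ 2 + 20 * t + 6 * isingDelta := by
    positivity
  positivity

private lemma ising_block_lt (t : ℝ) (ht : 0 < t) (ht1 : t < 1) : isingBlock t < t := by
  have hd := ising_d_pos
  have hd2 := ising_d_sq
  have hD := ising_den_pos t ht.le
  unfold isingBlock
  have hN : 0 < 2 * isingDelta ^ 2 * (t ^ 2 + 1) + (isingDelta ^ 3 + 3 * isingDelta) * t := by
    have : 0 < isingDelta ^ 3 := pow_pos hd 3
    nlinarith [sq_nonneg t]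
  have hnum : t * (t ^ 2 - 1) *
      (2 * isingDelta ^ 2 * (t ^ 2 + 1) + (isingDelta ^ 3 + 3 * isingDelta) * t) < 0 := by
    have h1 : t ^ 2 - 1 < 0 := by nlinarith
    have := mul_pos ht hN
    nlinarith
  have := div_neg_of_neg_of_pos hnum hD
  linarith

/-- symmetry: `isingBlock (t⁻¹) = (isingBlock t)⁻¹` for `t > 0`. -/
private lemma ising_block_inv (t : ℝ) (ht : 0 < t) :
    isingBlock t⁻¹ = (isingBlock t)⁻¹ := by
  have hd := ising_d_pos
  have hFt : 0 < isingBlock t := ising_block_pos t ht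
  have hFi : 0 < isingBlock t⁻¹ := ising_block_pos _ (inv_pos.mpr ht)
  apply eq_inv_of_mul_eq_one_left
  rw [ising_block_eq t ht.le, ising_block_eq t⁻¹ (inv_pos.mpr ht).le]
  have hD1 := ising_Dpos t ht.le
  have hD2 := ising_Dpos t⁻¹ (inv_pos.mpr ht).le
  field_simp

private lemma ising_iter_pos (t : ℝ) (ht : 0 < t) (n : ℕ) : 0 < isingBlock^[n] t := by
  induction n with
  | zero => exact ht
  | succ n ih => rw [Function.iterate_succ_apply']; exact ising_block_pos _ ih

private lemma ising_main (t : ℝ) (ht : 0 < t) (ht1 : t < 1) :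
    (∀ n : ℕ, isingBlock^[n + 1] t ≤ isingBlock^[n] t) ∧
      Tendsto (fun n : ℕ => isingBlock^[n] t) atTop (nhds 0) := by
  set x : ℕ → ℝ := fun n => isingBlock^[n] t with hx
  have hpos : ∀ n, 0 < x n := fun n => ising_iter_pos t ht n
  have hlt1 : ∀ n, x n < 1 := by
    intro n
    induction n with
    | zero => exact ht1
    | succ n ih =>
      have : x (n+1) = isingBlock (x n) := Function.iterate_succ_apply' _ _ _
      rw [this]
      exact lt_trans (ising_block_lt _ (hpos n) ih) ih
  have hstep : ∀ n, x (n + 1) ≤ x n := by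
    intro n
    have : x (n+1) = isingBlock (x n) := Function.iterate_succ_apply' _ _ _
    rw [this]
    exact (ising_block_lt _ (hpos n) (hlt1 n)).le
  refine ⟨hstep, ?_⟩
  have hanti : Antitone x := antitone_nat_of_succ_le hstep
  have hbdd : BddBelow (Set.range x) := ⟨0, by rintro y ⟨n, rfl⟩; exact (hpos n).le⟩
  have htend : Tendsto x atTop (nhds (⨅ n, x n)) :=
    tendsto_atTop_ciInf hanti hbdd
  set L := ⨅ n, x n with hL
  have hL0 : 0 ≤ L := le_ciInf fun n => (hpos n).le
  have hL1 : L < 1 := lt_of_le_of_lt (ciInf_le hbdd 0) ht1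
  -- L is a fixed point
  have hcont : ContinuousAt isingBlock L := by
    have hD := ising_den_pos L hL0
    unfold isingBlock
    have hnum : ContinuousAt (fun s : ℝ => s * (s ^ 2 - 1) *
        (2 * isingDelta ^ 2 * (s ^ 2 + 1) + (isingDelta ^ 3 + 3 * isingDelta) * s)) L := by
      fun_prop
    have hde : ContinuousAt (fun s : ℝ => 2 * isingDelta ^ 2 +
        (isingDelta ^ 3 + 9 * isingDelta) * s + (6 * isingDelta ^ 2 + 8) * s ^ 2 +
        6 * isingDelta * s ^ 3) L := by fun_prop
    exact continuousAt_id.add (hnum.div hde hD.ne')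
  have hfix : isingBlock L = L := by
    have h1 : Tendsto (fun n => isingBlock (x n)) atTop (nhds (isingBlock L)) :=
      hcont.tendsto.comp htend
    have h2 : Tendsto (fun n => x (n + 1)) atTop (nhds L) :=
      htend.comp (tendsto_add_atTop_nat 1)
    have h3 : (fun n => isingBlock (x n)) = fun n => x (n + 1) := by
      funext n; exact (Function.iterate_succ_apply' _ _ _).symm
    rw [h3] at h1
    exact tendsto_nhds_unique h1 h2
  have hLz : L = 0 := by
    by_contra h
    have hLpos : 0 < L := lt_of_le_of_ne hL0 (Ne.symm h)
    exact absurd hfix (ne_of_lt (ising_block_lt L hLpos hL1))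
  rw [hLz] at htend
  exact htend

theorem ising_block_map_dynamics :
    isingBlock 1 = 1 ∧
    (∀ t : ℝ, 0 < t → t < 1 →
      (∀ n : ℕ, isingBlock^[n + 1] t ≤ isingBlock^[n] t) ∧
        Tendsto (fun n : ℕ => isingBlock^[n] t) atTop (nhds 0)) ∧
    (∀ t : ℝ, 1 < t →
      Tendsto (fun n : ℕ => (isingBlock^[n] t)⁻¹) atTop (nhds 0)) := by
  refine ⟨?_, fun t ht ht1 => ising_main t ht ht1, ?_⟩
  · unfold isingBlock; norm_num
  · intro t ht
    have ht0 : 0 < t := lt_trans one_pos ht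
    have hinv : ∀ n : ℕ, (isingBlock^[n] t)⁻¹ = isingBlock^[n] t⁻¹ := by
      intro n
      induction n with
      | zero => rfl
      | succ n ih =>
        rw [Function.iterate_succ_apply', Function.iterate_succ_apply', ← ih,
          ising_block_inv _ (ising_iter_pos t ht0 n)]
    simp only [hinv]
    exact (ising_main t⁻¹ (inv_pos.mpr ht0) (inv_lt_one_of_one_lt₀ ht)).2
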